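/- (Schur-complement reduction of the SDP-relaxation LMI) Let P₀ be a symmetric positive definite n×n matrix, x̃₀ ∈ ℝⁿ a vector, and λ₁, …, λₘ ≥ 0 scalars. Then the (2n+1)×(2n+1) block matrix K(P₀, x̃₀, λ) is negative semidefinite if and only if the (n+1)×(n+1) block matrix N(P₀, x̃₀, λ) is positive semidefinite. -/

import Mathlib

open Matrix

/-- The symmetric `(2n+1) × (2n+1)` block matrix `K(P₀, x̃₀, λ)` of the SDP relaxation:
`[[P₀⁻¹ - Σᵢ λᵢ Pᵢ⁻¹, -x̃₀ + Σᵢ λᵢ Pᵢ⁻¹xᵢ, 0],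
  [(-x̃₀ + Σᵢ λᵢ Pᵢ⁻¹xᵢ)ᵀ, -1 - Σᵢ λᵢ(xᵢᵀPᵢ⁻¹xᵢ - 1), x̃₀ᵀ],
  [0, x̃₀, -P₀⁻¹]]`. -/
noncomputable def sdpBlockK {n m : ℕ} (x : Fin m → (Fin n → ℝ))
    (P : Fin m → Matrix (Fin n) (Fin n) ℝ)
    (P₀ : Matrix (Fin n) (Fin n) ℝ) (xt : Fin n → ℝ) (lam : Fin m → ℝ) :
    Matrix (Fin n ⊕ (Unit ⊕ Fin n)) (Fin n ⊕ (Unit ⊕ Fin n)) ℝ :=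
  Matrix.fromBlocks
    (P₀⁻¹ - ∑ i, lam i • (P i)⁻¹)
    (Matrix.fromCols (Matrix.replicateCol Unit (-xt + ∑ i, lam i • ((P i)⁻¹ *ᵥ x i))) 0)
    (Matrix.fromRows (Matrix.replicateRow Unit (-xt + ∑ i, lam i • ((P i)⁻¹ *ᵥ x i))) 0)
    (Matrix.fromBlocks
      (Matrix.of fun _ _ => -1 - ∑ i, lam i * (x i ⬝ᵥ ((P i)⁻¹ *ᵥ x i) - 1))
      (Matrix.replicateRow Unit xt) (Matrix.replicateCol Unit xt) (-P₀⁻¹))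

/-- The symmetric `(n+1) × (n+1)` block matrix `N(P₀, x̃₀, λ)`:
`[[Σᵢ λᵢ Pᵢ⁻¹ - P₀⁻¹, x̃₀ - Σᵢ λᵢ Pᵢ⁻¹xᵢ],
  [(x̃₀ - Σᵢ λᵢ Pᵢ⁻¹xᵢ)ᵀ, 1 + Σᵢ λᵢ(xᵢᵀPᵢ⁻¹xᵢ - 1) - x̃₀ᵀP₀x̃₀]]`. -/
noncomputable def sdpBlockN {n m : ℕ} (x : Fin m → (Fin n → ℝ))
    (P : Fin m → Matrix (Fin n) (Fin n) ℝ)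
    (P₀ : Matrix (Fin n) (Fin n) ℝ) (xt : Fin n → ℝ) (lam : Fin m → ℝ) :
    Matrix (Fin n ⊕ Unit) (Fin n ⊕ Unit) ℝ :=
  Matrix.fromBlocks
    ((∑ i, lam i • (P i)⁻¹) - P₀⁻¹)
    (Matrix.replicateCol Unit (xt - ∑ i, lam i • ((P i)⁻¹ *ᵥ x i)))
    (Matrix.replicateRow Unit (xt - ∑ i, lam i • ((P i)⁻¹ *ᵥ x i)))
    (Matrix.of fun _ _ =>
      1 + (∑ i, lam i * (x i ⬝ᵥ ((P i)⁻¹ *ᵥ x i) - 1)) - xt ⬝ᵥ (P₀ *ᵥ xt))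

private lemma quadK {n : ℕ} (A : Matrix (Fin n) (Fin n) ℝ) (b xt : Fin n → ℝ) (c : ℝ)
    (Q : Matrix (Fin n) (Fin n) ℝ) (u v : Fin n → ℝ) (t : ℝ) :
    (Sum.elim u (Sum.elim (fun _ => t) v)) ⬝ᵥ
      ((Matrix.fromBlocks A
        (Matrix.fromCols (Matrix.replicateCol Unit b) 0)
        (Matrix.fromRows (Matrix.replicateRow Unit b) 0)
        (Matrix.fromBlocks (Matrix.of fun _ _ => c) (Matrix.replicateRow Unit xt)
          (Matrix.replicateCol Unit xt) Q)) *ᵥ (Sum.elim u (Sum.elim (fun _ => t) v)))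
    = u ⬝ᵥ (A *ᵥ u) + t * (u ⬝ᵥ b) + t * (b ⬝ᵥ u) + c * t * t
      + t * (xt ⬝ᵥ v) + t * (v ⬝ᵥ xt) + v ⬝ᵥ (Q *ᵥ v) := by
  simp [fromBlocks_mulVec, sumElim_dotProduct_sumElim, fromCols_mulVec_sumElim,
    dotProduct_add, mulVec, dotProduct, Finset.mul_sum, Finset.sum_add_distrib]
  simp only [mul_add, add_mul, Finset.sum_add_distrib, Finset.mul_sum]
  ring_nf
  try simp only [mul_comm, mul_left_comm]
  try ring_nf

private lemma quadN {n : ℕ} (A : Matrix (Fin n) (Fin n) ℝ) (b : Fin n → ℝ) (c : ℝ)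
    (u : Fin n → ℝ) (t : ℝ) :
    (Sum.elim u (fun _ : Unit => t)) ⬝ᵥ
      ((Matrix.fromBlocks A (Matrix.replicateCol Unit b) (Matrix.replicateRow Unit b)
        (Matrix.of fun _ _ => c)) *ᵥ (Sum.elim u (fun _ => t)))
    = u ⬝ᵥ (A *ᵥ u) + t * (u ⬝ᵥ b) + t * (b ⬝ᵥ u) + c * t * t := by
  simp [fromBlocks_mulVec, sumElim_dotProduct_sumElim,
    dotProduct_add, mulVec, dotProduct, Finset.mul_sum, Finset.sum_add_distrib]
  simp only [mul_add, add_mul, Finset.sum_add_distrib, Finset.mul_sum]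
  ring_nf
  try simp only [mul_comm, mul_left_comm]
  try ring_nf


section
variable {n m : ℕ} (x : Fin m → (Fin n → ℝ)) (P : Fin m → Matrix (Fin n) (Fin n) ℝ)
  (P₀ : Matrix (Fin n) (Fin n) ℝ) (xt : Fin n → ℝ) (lam : Fin m → ℝ)

private lemma keyIdentity (hP₀ : P₀.PosDef) (u v : Fin n → ℝ) (t : ℝ) :
    (Sum.elim u (Sum.elim (fun _ => t) v)) ⬝ᵥ
        (sdpBlockK x P P₀ xt lam *ᵥ (Sum.elim u (Sum.elim (fun _ => t) v)))
      + (Sum.elim u (fun _ : Unit => t)) ⬝ᵥ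
        (sdpBlockN x P P₀ xt lam *ᵥ (Sum.elim u (fun _ => t)))
      + (v - t • (P₀ *ᵥ xt)) ⬝ᵥ (P₀⁻¹ *ᵥ (v - t • (P₀ *ᵥ xt))) = 0 := by
  have hdet : IsUnit P₀.det := isUnit_iff_ne_zero.mpr (ne_of_gt hP₀.det_pos)
  have hinv : P₀⁻¹ *ᵥ (P₀ *ᵥ xt) = xt := by
    rw [mulVec_mulVec, Matrix.nonsing_inv_mul _ hdet, one_mulVec]
  have hsymm : P₀⁻¹ᵀ = P₀⁻¹ := by
    ext i j
    simpa using hP₀.inv.isHermitian.apply i j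
  have h2 : ∀ w : Fin n → ℝ, (P₀ *ᵥ xt) ⬝ᵥ (P₀⁻¹ *ᵥ w) = xt ⬝ᵥ w := by
    intro w
    rw [dotProduct_mulVec, ← mulVec_transpose, hsymm, hinv]
  rw [sdpBlockK, sdpBlockN, quadK, quadN]
  simp only [mulVec_sub, sub_dotProduct, dotProduct_sub, mulVec_smul, dotProduct_smul,
    smul_dotProduct, smul_eq_mul, hinv, h2, sub_mulVec, add_mulVec, neg_mulVec,
    dotProduct_add, add_dotProduct, dotProduct_neg, neg_dotProduct, neg_mulVec]
  have h3 : (P₀ *ᵥ xt) ⬝ᵥ xt = xt ⬝ᵥ (P₀ *ᵥ xt) := dotProduct_comm _ _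
  rw [h3]
  ring
end

theorem sdp_LMI_iff_reduced_LMI (n m : ℕ) (hn : 0 < n) (hm : 0 < m)
    (x : Fin m → (Fin n → ℝ)) (P : Fin m → Matrix (Fin n) (Fin n) ℝ)
    (hP : ∀ i, (P i).PosDef)
    (P₀ : Matrix (Fin n) (Fin n) ℝ) (hP₀ : P₀.PosDef) (xt : Fin n → ℝ)
    (lam : Fin m → ℝ) (hlam : ∀ i, 0 ≤ lam i) :
    (∀ ζ : (Fin n ⊕ (Unit ⊕ Fin n)) → ℝ,
        ζ ⬝ᵥ (sdpBlockK x P P₀ xt lam *ᵥ ζ) ≤ 0) ↔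
      (sdpBlockN x P P₀ xt lam).PosSemidef := by
  have hHerm : (sdpBlockN x P P₀ xt lam).IsHermitian := by
    rw [sdpBlockN, isHermitian_fromBlocks_iff]
    refine ⟨?_, ?_, ?_, ?_⟩
    · exact Matrix.IsHermitian.sub (by
        rw [Matrix.IsHermitian, conjTranspose_sum]
        refine Finset.sum_congr rfl fun i _ => ?_
        rw [conjTranspose_smul, star_trivial, (hP i).inv.isHermitian]) hP₀.inv.isHermitian
    · rw [conjTranspose_replicateCol]; simp
    · rw [conjTranspose_replicateRow]; simp
    · ext i j; simp [Matrix.conjTranspose_apply]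
  constructor
  · intro hK
    refine Matrix.PosSemidef.of_dotProduct_mulVec_nonneg hHerm fun z => ?_
    have hz : z = Sum.elim (fun i => z (Sum.inl i)) (fun _ : Unit => z (Sum.inr ())) := by
      funext w; rcases w with i | ⟨⟩ <;> rfl
    set u : Fin n → ℝ := fun i => z (Sum.inl i)
    set t : ℝ := z (Sum.inr ())
    have hkey := keyIdentity x P P₀ xt lam hP₀ u (t • (P₀ *ᵥ xt)) t
    rw [sub_self] at hkey
    simp only [zero_dotProduct] at hkey
    have hK' := hK (Sum.elim u (Sum.elim (fun _ => t) (t • (P₀ *ᵥ xt))))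
    rw [star_trivial]
    rw [hz]
    linarith
  · intro hN ζ
    have hζ : ζ = Sum.elim (fun i => ζ (Sum.inl i))
        (Sum.elim (fun _ : Unit => ζ (Sum.inr (Sum.inl ()))) (fun i => ζ (Sum.inr (Sum.inr i)))) := by
      funext w; rcases w with i | (⟨⟩ | i) <;> rfl
    set u : Fin n → ℝ := fun i => ζ (Sum.inl i)
    set t : ℝ := ζ (Sum.inr (Sum.inl ()))
    set v : Fin n → ℝ := fun i => ζ (Sum.inr (Sum.inr i))
    have hkey := keyIdentity x P P₀ xt lam hP₀ u v t
    have h1 : 0 ≤ (Sum.elim u (fun _ : Unit => t)) ⬝ᵥ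
        (sdpBlockN x P P₀ xt lam *ᵥ (Sum.elim u (fun _ => t))) := by
      have := hN.dotProduct_mulVec_nonneg (Sum.elim u (fun _ : Unit => t))
      rwa [star_trivial] at this
    have h2 : 0 ≤ (v - t • (P₀ *ᵥ xt)) ⬝ᵥ (P₀⁻¹ *ᵥ (v - t • (P₀ *ᵥ xt))) := by
      have := hP₀.inv.posSemidef.dotProduct_mulVec_nonneg (v - t • (P₀ *ᵥ xt))
      rwa [star_trivial] at this
    rw [hζ]
    linarith
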